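/- In a left brace B, for any a ∈ B, a^p = pa + Σ_{i=2}^{p−1} C(p,i)(λ_a − Id)^{i−1}(a) + (λ_a − Id)^{p−1}(a), where the operators act on the additive group and pa denotes the p-fold additive sum. -/

import Mathlib

/-- In a left brace `B`, for any `a ∈ B` and any prime `p`,
`a^p = p·a + Σ_{i=2}^{p−1} C(p,i)·(λ_a − Id)^{i−1}(a) + (λ_a − Id)^{p−1}(a)`,
where the operators act on the additive group and `p·a` is the `p`-fold additive sum. -/
theorem stmt12 (B : Type*) [AddCommGroup B] [Group B]
    (brace : ∀ a b c : B, a * (b + c) + a = a * b + a * c)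
    (lam : B →* Multiplicative (AddAut B)) (hlam : ∀ g h : B, Multiplicative.toAdd (lam g) h = g * h - g)
    (p : ℕ) (hp : p.Prime) (a : B) :
    a ^ p = p • a +
      (∑ i ∈ Finset.Icc 2 (p - 1), Nat.choose p i •
        (((show AddMonoid.End B from (Multiplicative.toAdd (lam a)).toAddMonoidHom) - 1) ^ (i - 1)) a) +
      (((show AddMonoid.End B from (Multiplicative.toAdd (lam a)).toAddMonoidHom) - 1) ^ (p - 1)) a := by
  set L : AddMonoid.End B := (show AddMonoid.End B from (Multiplicative.toAdd (lam a)).toAddMonoidHom) with hL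
  set D : AddMonoid.End B := L - 1 with hD
  -- 1 = 0 in a brace
  have hone : (1 : B) = 0 := by
    have h := brace 1 0 0
    simp only [add_zero, one_mul] at h
    linear_combination (norm := abel) h
  -- a * x = L x + a
  have hmul : ∀ x : B, a * x = L x + a := by
    intro x
    have : L x = a * x - a := hlam a x
    rw [this]; abel
  -- a ^ n = ∑ k < n, L^k a
  have hpow : ∀ n : ℕ, a ^ n = ∑ k ∈ Finset.range n, (L ^ k) a := by
    intro n
    induction n with
    | zero => simpa using hone
    | succ n ih =>
      rw [pow_succ', ih, hmul, map_sum, Finset.sum_range_succ' (fun k => (L ^ k) a) n]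
      have h5 : ∀ k ∈ Finset.range n, L ((L ^ k) a) = (L ^ (k + 1)) a :=
        fun k _ => by rw [pow_succ']; rfl
      rw [Finset.sum_congr rfl h5]
      simp
  have hLD : L = D + 1 := by rw [hD]; abel
  -- L^k a = ∑ m ≤ k, C(k,m) • D^m a
  have hbin : ∀ k : ℕ, (L ^ k) a
      = ∑ m ∈ Finset.range (k + 1), k.choose m • ((D ^ m) a) := by
    intro k
    have h : L ^ k = ∑ m ∈ Finset.range (k + 1), k.choose m • D ^ m := by
      rw [hLD, (Commute.one_right D).add_pow]
      apply Finset.sum_congr rfl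
      intro m _
      rw [one_pow, mul_one, nsmul_eq_mul, (Nat.commute_cast (D ^ m) (k.choose m)).eq]
    rw [h]; refine (AddMonoidHom.finset_sum_apply (fun m => (show B →+ B from k.choose m • D ^ m)) _ a).trans ?_
    exact Finset.sum_congr rfl fun _ _ => rfl
  -- key identity by induction
  have key : ∀ n : ℕ, (∑ k ∈ Finset.range n, (L ^ k) a)
      = ∑ m ∈ Finset.range n, n.choose (m + 1) • ((D ^ m) a) := by
    intro n
    induction n with
    | zero => simp
    | succ n ih =>
      rw [Finset.sum_range_succ, ih, hbin]
      have : ∀ m ∈ Finset.range (n + 1), (n + 1).choose (m + 1) • ((D ^ m) a)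
          = n.choose (m + 1) • ((D ^ m) a) + n.choose m • ((D ^ m) a) := by
        intro m _
        rw [Nat.choose_succ_succ, add_smul, add_comm]
      rw [Finset.sum_congr rfl this, Finset.sum_add_distrib]
      congr 1
      rw [Finset.sum_range_succ, Nat.choose_succ_self, zero_smul, add_zero]
  -- put it together
  obtain ⟨n, rfl⟩ : ∃ n, p = n + 2 := ⟨p - 2, by have := hp.two_le; omega⟩
  rw [hpow, key]
  rw [Finset.sum_range_succ,
    Finset.sum_range_succ' (fun m => (n + 2).choose (m + 1) • ((D ^ m) a)) n]
  have e1 : (n + 2).choose (0 + 1) • ((D ^ 0) a) = (n + 2) • a := by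
    simp [Nat.choose_one_right]
  have e2 : (n + 2).choose (n + 1 + 1) • ((D ^ (n + 1)) a) = (D ^ (n + 2 - 1)) a := by
    simp
  have e3 : (∑ i ∈ Finset.Icc 2 (n + 2 - 1), (n + 2).choose i • ((D ^ (i - 1)) a))
      = ∑ m ∈ Finset.range n, (n + 2).choose (m + 1 + 1) • ((D ^ (m + 1)) a) := by
    have h4 : Finset.Icc 2 (n + 2 - 1) = Finset.Ico 2 (n + 2) := by
      rw [show n + 2 - 1 = n + 1 by omega, ← Finset.Ico_add_one_right_eq_Icc]; rfl
    rw [h4, Finset.sum_Ico_eq_sum_range]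
    apply Finset.sum_congr (by congr 1)
    intro m _
    rw [show 2 + m = m + 1 + 1 by omega, show m + 1 + 1 - 1 = m + 1 by omega]
  rw [e1, e2, e3]
  abel
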